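/- Assume λ + μ² ≠ 0. Let P, Q, R, S be a pqrs-quad that additionally satisfies the A-relations (for every w ∈ ℂ: P(iπ−w) = −e^{iℓπ}·e^{2(1−ℓ)w}·P(w); Q(iπ−w) = e^{iℓπ}·e^{−2ℓw}·(μ·P(w) + e^{2w}·R(w)); R(iπ−w) = e^{iℓπ}·e^{2(1−ℓ)w}·(μ·e^{2w}·P(w) + Q(w)); S(iπ−w) = −e^{iℓπ}·e^{−2ℓw}·(μ·(μ·e^{2w}·P(w) + Q(w)) + e^{2w}·(μ·e^{2w}·R(w) + S(w)))), and let F be an entire function with ℋ[F] = 0. Then L_A is a quasi-involution: for every w ∈ ℂ, L_A[L_A[F]](w) = −e^{iℓπ}·𝔇·F(w), where 𝔇 = P(0)·S(0) − Q(0)·R(0) is the (constant) value of the first integral. -/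

import Mathlib

noncomputable def ipi : ℂ := (Real.pi : ℂ) * Complex.I

noncomputable def heunOp (ell lam mu : ℂ) (F : ℂ → ℂ) : ℂ → ℂ := fun w =>
  deriv (deriv F) w + (ell + mu * (Complex.exp (-w) - Complex.exp w)) * deriv F w +
    (lam - (ell + 1) * mu * Complex.exp w) * F w

noncomputable def opLA (mu : ℂ) (P Q : ℂ → ℂ) (F : ℂ → ℂ) : ℂ → ℂ := fun w =>
  Complex.exp (mu * (Complex.exp w + Complex.exp (-w))) *
    (Q (ipi - w) * F (ipi - w) - Complex.exp (-w) * P (ipi - w) * deriv F (ipi - w))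

lemma exp_two_mul' (w : ℂ) : Complex.exp (2 * w) = Complex.exp w ^ 2 := by
  rw [two_mul, Complex.exp_add, sq]

lemma exp_mul_exp_neg (w : ℂ) : Complex.exp w * Complex.exp (-w) = 1 := by
  rw [← Complex.exp_add]; simp

lemma dconst_alg (u v p q r s p1 q1 r1 s1 mu ell lam : ℂ)
    (hu : u * v = 1)
    (h1 : u * p1 = (mu + (ell - 1) * u) * p - q + u ^ 2 * r)
    (h2 : q1 = u * ((lam - (ell + 1) * mu * u) * p + mu * q + s))
    (h3 : u * r1 = -(lam + mu ^ 2) * p + u * (2 * (ell - 1) - mu * u) * r - s)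
    (h4 : u * s1 = -(lam + mu ^ 2) * q + u ^ 2 * (lam - (ell + 1) * mu * u) * r
        + ((ell - 1) * u - mu) * s) :
    2 * (1 - ell) * (p * s - q * r) + (p1 * s + p * s1 - q1 * r - q * r1) = 0 := by
  linear_combination (v * s) * h1 + (-r) * h2 + (-(v * q)) * h3 + (v * p) * h4 +
    (-(s * p1) + q * r1 + 2 * q * r - 2 * q * r * ell - p * s1 - 2 * p * s + 2 * p * s * ell
      + u * r * s + u * q * r * mu + u * p * r * lam - u ^ 2 * p * r * mu
      - u ^ 2 * p * r * mu * ell) * hu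

lemma dconst (ell lam mu : ℂ) (P Q R S : ℂ → ℂ)
    (hP : Differentiable ℂ P) (hQ : Differentiable ℂ Q)
    (hR : Differentiable ℂ R) (hS : Differentiable ℂ S)
    (hsys1 : ∀ w : ℂ, Complex.exp w * deriv P w =
      (mu + (ell - 1) * Complex.exp w) * P w - Q w + Complex.exp (2 * w) * R w)
    (hsys2 : ∀ w : ℂ, deriv Q w =
      Complex.exp w * ((lam - (ell + 1) * mu * Complex.exp w) * P w + mu * Q w + S w))
    (hsys3 : ∀ w : ℂ, Complex.exp w * deriv R w =
      -(lam + mu ^ 2) * P w + Complex.exp w * (2 * (ell - 1) - mu * Complex.exp w) * R w - S w)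
    (hsys4 : ∀ w : ℂ, Complex.exp w * deriv S w =
      -(lam + mu ^ 2) * Q w + Complex.exp (2 * w) * (lam - (ell + 1) * mu * Complex.exp w) * R w
        + ((ell - 1) * Complex.exp w - mu) * S w) :
    ∀ w : ℂ, Complex.exp (2 * (1 - ell) * w) * (P w * S w - Q w * R w)
      = P 0 * S 0 - Q 0 * R 0 := by
  set g : ℂ → ℂ := fun w => Complex.exp (2 * (1 - ell) * w) * (P w * S w - Q w * R w) with hg
  have key : ∀ x : ℂ, HasDerivAt g 0 x := by
    intro x
    have hE : HasDerivAt (fun w : ℂ => Complex.exp (2 * (1 - ell) * w))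
        (Complex.exp (2 * (1 - ell) * x) * (2 * (1 - ell) * 1)) x :=
      ((hasDerivAt_id x).const_mul (2 * (1 - ell))).cexp
    have hPS : HasDerivAt (fun w => P w * S w) (deriv P x * S x + P x * deriv S x) x :=
      ((hP x).hasDerivAt).mul ((hS x).hasDerivAt)
    have hQR : HasDerivAt (fun w => Q w * R w) (deriv Q x * R x + Q x * deriv R x) x :=
      ((hQ x).hasDerivAt).mul ((hR x).hasDerivAt)
    have h := hE.mul (hPS.sub hQR)
    have hu : Complex.exp x * Complex.exp (-x) = 1 := exp_mul_exp_neg x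
    have h1 := hsys1 x
    rw [exp_two_mul'] at h1
    have h2 := hsys2 x
    have h3 := hsys3 x
    have h4 := hsys4 x
    rw [exp_two_mul'] at h4
    have halg := dconst_alg (Complex.exp x) (Complex.exp (-x)) (P x) (Q x) (R x) (S x)
      (deriv P x) (deriv Q x) (deriv R x) (deriv S x) mu ell lam hu h1 h2 h3 h4
    have hval : Complex.exp (2 * (1 - ell) * x) * (2 * (1 - ell) * 1) *
        (P x * S x - Q x * R x) +
        Complex.exp (2 * (1 - ell) * x) *
          ((deriv P x * S x + P x * deriv S x) - (deriv Q x * R x + Q x * deriv R x)) = 0 := by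
      linear_combination (Complex.exp (2 * (1 - ell) * x)) * halg
    simp only [Pi.sub_apply] at h
    rw [hval] at h
    exact h
  have hdiff : Differentiable ℂ g := fun x => (key x).differentiableAt
  have hder : ∀ x : ℂ, deriv g x = 0 := fun x => (key x).deriv
  have := is_const_of_deriv_eq_zero hdiff hder
  intro w
  have h := this w 0
  simpa [hg] using h

lemma hasDerivAt_opLA (mu : ℂ) (P Q F : ℂ → ℂ)
    (hP : Differentiable ℂ P) (hQ : Differentiable ℂ Q)
    (hF : Differentiable ℂ F) (hF' : Differentiable ℂ (deriv F)) (x : ℂ) :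
    HasDerivAt (opLA mu P Q F)
      (Complex.exp (mu * (Complex.exp x + Complex.exp (-x))) *
          (mu * (Complex.exp x + Complex.exp (-x) * -1)) *
          (Q (ipi - x) * F (ipi - x) -
            Complex.exp (-x) * P (ipi - x) * deriv F (ipi - x))
        + Complex.exp (mu * (Complex.exp x + Complex.exp (-x))) *
          ((deriv Q (ipi - x) * -1) * F (ipi - x) + Q (ipi - x) * (deriv F (ipi - x) * -1)
            - (((Complex.exp (-x) * -1) * P (ipi - x)
                  + Complex.exp (-x) * (deriv P (ipi - x) * -1)) * deriv F (ipi - x)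
                + Complex.exp (-x) * P (ipi - x) * (deriv (deriv F) (ipi - x) * -1)))) x := by
  have hneg : HasDerivAt (fun y : ℂ => ipi - y) (-1) x := (hasDerivAt_id x).const_sub ipi
  have hexpneg : HasDerivAt (fun y : ℂ => Complex.exp (-y)) (Complex.exp (-x) * -1) x :=
    ((hasDerivAt_id x).neg).cexp
  have hE : HasDerivAt (fun y : ℂ => Complex.exp (mu * (Complex.exp y + Complex.exp (-y))))
      (Complex.exp (mu * (Complex.exp x + Complex.exp (-x))) *
        (mu * (Complex.exp x + Complex.exp (-x) * -1))) x :=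
    (((Complex.hasDerivAt_exp x).add hexpneg).const_mul mu).cexp
  have hQs : HasDerivAt (fun y : ℂ => Q (ipi - y)) (deriv Q (ipi - x) * -1) x :=
    ((hQ (ipi - x)).hasDerivAt).comp x hneg
  have hPs : HasDerivAt (fun y : ℂ => P (ipi - y)) (deriv P (ipi - x) * -1) x :=
    ((hP (ipi - x)).hasDerivAt).comp x hneg
  have hFs : HasDerivAt (fun y : ℂ => F (ipi - y)) (deriv F (ipi - x) * -1) x :=
    ((hF (ipi - x)).hasDerivAt).comp x hneg
  have hF's : HasDerivAt (fun y : ℂ => deriv F (ipi - y)) (deriv (deriv F) (ipi - x) * -1) x :=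
    ((hF' (ipi - x)).hasDerivAt).comp x hneg
  exact hE.mul ((hQs.mul hFs).sub ((hexpneg.mul hPs).mul hF's))

theorem statement_10 (ell lam mu : ℂ) (hne : lam + mu ^ 2 ≠ 0) (P Q R S : ℂ → ℂ)
    (hP : Differentiable ℂ P) (hQ : Differentiable ℂ Q)
    (hR : Differentiable ℂ R) (hS : Differentiable ℂ S)
    (hsys1 : ∀ w : ℂ, Complex.exp w * deriv P w =
      (mu + (ell - 1) * Complex.exp w) * P w - Q w + Complex.exp (2 * w) * R w)
    (hsys2 : ∀ w : ℂ, deriv Q w =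
      Complex.exp w * ((lam - (ell + 1) * mu * Complex.exp w) * P w + mu * Q w + S w))
    (hsys3 : ∀ w : ℂ, Complex.exp w * deriv R w =
      -(lam + mu ^ 2) * P w + Complex.exp w * (2 * (ell - 1) - mu * Complex.exp w) * R w - S w)
    (hsys4 : ∀ w : ℂ, Complex.exp w * deriv S w =
      -(lam + mu ^ 2) * Q w + Complex.exp (2 * w) * (lam - (ell + 1) * mu * Complex.exp w) * R w
        + ((ell - 1) * Complex.exp w - mu) * S w)
    (hA : ∀ w : ℂ,
      P (ipi - w) = -Complex.exp (Complex.I * ell * (Real.pi : ℂ)) *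
        Complex.exp (2 * (1 - ell) * w) * P w ∧
      Q (ipi - w) = Complex.exp (Complex.I * ell * (Real.pi : ℂ)) *
        Complex.exp (-(2 * ell) * w) * (mu * P w + Complex.exp (2 * w) * R w) ∧
      R (ipi - w) = Complex.exp (Complex.I * ell * (Real.pi : ℂ)) *
        Complex.exp (2 * (1 - ell) * w) * (mu * Complex.exp (2 * w) * P w + Q w) ∧
      S (ipi - w) = -Complex.exp (Complex.I * ell * (Real.pi : ℂ)) *
        Complex.exp (-(2 * ell) * w) *
        (mu * (mu * Complex.exp (2 * w) * P w + Q w) +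
          Complex.exp (2 * w) * (mu * Complex.exp (2 * w) * R w + S w)))
    (F : ℂ → ℂ) (hF : Differentiable ℂ F) (hF' : Differentiable ℂ (deriv F))
    (hHeun : ∀ w : ℂ, heunOp ell lam mu F w = 0) :
    ∀ w : ℂ,
      opLA mu P Q (opLA mu P Q F) w =
        -Complex.exp (Complex.I * ell * (Real.pi : ℂ)) * (P 0 * S 0 - Q 0 * R 0) * F w := by
  intro w
  have hipi : Complex.exp ipi = -1 := by rw [ipi]; exact Complex.exp_pi_mul_I
  have he1 : Complex.exp (ipi - w) = -Complex.exp (-w) := by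
    rw [sub_eq_add_neg, Complex.exp_add, hipi]; ring
  have he2 : Complex.exp (-(ipi - w)) = -Complex.exp w := by
    have hm : Complex.exp (-ipi) = -1 := by
      rw [Complex.exp_neg, hipi]; norm_num
    rw [neg_sub, sub_eq_add_neg, Complex.exp_add, hm]
    ring
  have hσσ : ipi - (ipi - w) = w := by ring
  have hder := (hasDerivAt_opLA mu P Q F hP hQ hF hF' (ipi - w)).deriv
  rw [hσσ, he1, he2] at hder
  obtain ⟨hA1, hA2, hA3, hA4⟩ := hA w
  have h1 := hsys1 w
  rw [exp_two_mul'] at h1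
  have h2 := hsys2 w
  have hH := hHeun w
  simp only [heunOp] at hH
  have hD := dconst ell lam mu P Q R S hP hQ hR hS hsys1 hsys2 hsys3 hsys4 w
  have hu : Complex.exp w * Complex.exp (-w) = 1 := exp_mul_exp_neg w
  have hEE : Complex.exp (mu * (-Complex.exp (-w) + -Complex.exp w)) *
      Complex.exp (mu * (Complex.exp w + Complex.exp (-w))) = 1 := by
    rw [← Complex.exp_add, show mu * (-Complex.exp (-w) + -Complex.exp w) +
      mu * (Complex.exp w + Complex.exp (-w)) = 0 by ring, Complex.exp_zero]
  have hab : Complex.exp (-(2 * ell) * w) * Complex.exp w ^ 2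
      = Complex.exp (2 * (1 - ell) * w) := by
    rw [sq, ← Complex.exp_add, ← Complex.exp_add]
    congr 1
    ring
  simp only [opLA]
  rw [hσσ, he1, he2, hder, hA1, hA2, exp_two_mul']
  set E : ℂ := Complex.exp (mu * (Complex.exp w + Complex.exp (-w))) with hEdef
  set Es : ℂ := Complex.exp (mu * (-Complex.exp (-w) + -Complex.exp w)) with hEsdef
  set A : ℂ := Complex.exp (2 * (1 - ell) * w) with hAdef
  set c : ℂ := Complex.exp (Complex.I * ell * (Real.pi : ℂ)) with hcdef
  set b : ℂ := Complex.exp (-(2 * ell) * w) with hbdef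
  set u : ℂ := Complex.exp w with hudef
  set v : ℂ := Complex.exp (-w) with hvdef
  set p : ℂ := P w with hpdef
  set q : ℂ := Q w with hqdef
  set r : ℂ := R w with hrdef
  set s : ℂ := S w with hsdef
  set p1 : ℂ := deriv P w with hp1def
  set q1 : ℂ := deriv Q w with hq1def
  set f : ℂ := F w with hfdef
  set f1 : ℂ := deriv F w with hf1def
  set f2 : ℂ := deriv (deriv F) w with hf2def
  linear_combination (-(c * b * u * p * f1)) * h1 + (-(c * b * u * p * f)) * h2 +
    (-(c * b * u ^ 2 * p ^ 2)) * hH + (-(c * f)) * hD +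
    (-(c * b * p * q * f * mu) - c * b * u * p * q1 * f - A * c * p ^ 2 * f2
      - E * Es * c * b * u * p * q * f1 - E * Es * c * b * u * v * p * q * f * mu
      + E * Es * c * b * u ^ 3 * p ^ 2 * f1 * mu - E * Es * A * c * p * p1 * f1
      + E * Es * A * c * p * q * f * mu - E * Es * A * c * p ^ 2 * f1
      - E * Es * A * c * v * p ^ 2 * f1 * mu) * hu +
    (c * b * p * q * f * mu - c * b * u * p * q * f1 + c * b * u * p ^ 2 * f1 * mu
      - c * b * u * v * p * q * f * mu + c * b * u ^ 2 * q * r * f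
      - c * b * u ^ 2 * p * p1 * f1 - c * b * u ^ 2 * p ^ 2 * f1
      - c * b * u ^ 2 * v * p * q1 * f - c * b * u ^ 2 * v * p ^ 2 * f1 * mu
      + c * b * u ^ 3 * p * r * f1 + c * b * u ^ 3 * p ^ 2 * f1 * mu
      + A * c * p * q * f * mu - A * c * u * v * p ^ 2 * f2) * hEE +
    (c * q * r * f - c * p * s * f - c * p * q * f * mu + c * p ^ 2 * f2
      + E * Es * c * p * p1 * f1 + E * Es * c * p ^ 2 * f1 + E * Es * c * v * p * q1 * f
      + E * Es * c * v * p * q * f1 + E * Es * c * v * p ^ 2 * f1 * mu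
      + E * Es * c * v ^ 2 * p * q * f * mu - E * Es * c * u ^ 2 * v * p ^ 2 * f1 * mu) * hab
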